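/- arXiv:1804.00700 — 3 statements merged into one kernel-verified Lean document; each statement's English description precedes it below -/
import Mathlib

section
/- Let Γ be a group acting on a monoid M by monoid automorphisms, let f ∈ M, let 𝒜 = Mˣ be the unit group of M with the induced Γ-action, and let 𝒜_f = {α ∈ Mˣ : α^{-1}·f·α = f} be the stabilizer subgroup of f. Assume 𝒜_f is finite and Γ-stable (σ • 𝒜_f = 𝒜_f for all σ ∈ Γ), and suppose φ : Γ → Mˣ satisfies σ • f = (φ σ)^{-1}·f·(φ σ) for all σ ∈ Γ. Then: (i) for every σ ∈ Γ, φ σ lies in the normalizer of 𝒜_f in Mˣ; and (ii) for all σ, τ ∈ Γ, the element (φ σ)·(σ • φ τ)·(φ(στ))^{-1} lies in 𝒜_f, i.e. φ is a 1-cocycle with values in the quotient 𝒜_f\N(𝒜_f). -/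
/-- The action of `σ : Γ` on the units of a monoid `M`, induced by a
`MulDistribMulAction` of `Γ` on `M`. -/
def unitsSMul {Γ M : Type*} [Group Γ] [Monoid M] [MulDistribMulAction Γ M]
    (σ : Γ) (u : Mˣ) : Mˣ :=
  Units.map (MulDistribMulAction.toMonoidHom M σ) u

theorem unitsSMul_val {Γ M : Type*} [Group Γ] [Monoid M] [MulDistribMulAction Γ M]
    (σ : Γ) (u : Mˣ) : (↑(unitsSMul σ u) : M) = σ • (u : M) := rfl

/-- **Doyle–Silverman, Proposition 4.1(a) (abstract form).**  Let `Γ` act on a monoid `M`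
by monoid automorphisms, let `f ∈ M`, let `𝒜_f ⊆ Mˣ` be the stabilizer of `f` under
conjugation, assumed finite and `Γ`-stable, and let `φ : Γ → Mˣ` satisfy
`σ • f = (φ σ)⁻¹ · f · (φ σ)`.  Then each `φ σ` normalizes `𝒜_f`, and
`φ` is a `1`-cocycle with values in `𝒜_f\N(𝒜_f)`:  for all `σ τ`, the element
`(φ σ)·(σ • φ τ)·(φ (σ·τ))⁻¹` lies in `𝒜_f`. -/
theorem fom_cocycle_in_normalizer
    {Γ M : Type*} [Group Γ] [Monoid M] [MulDistribMulAction Γ M]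
    (f : M)
    (𝒜 : Set Mˣ) (h𝒜 : 𝒜 = {α : Mˣ | (↑α⁻¹ : M) * f * ↑α = f})
    (hfin : 𝒜.Finite)
    (hstable : ∀ σ : Γ, (fun α => unitsSMul σ α) '' 𝒜 = 𝒜)
    (φ : Γ → Mˣ)
    (hφ : ∀ σ : Γ, σ • f = (↑(φ σ)⁻¹ : M) * f * ↑(φ σ)) :
    (∀ σ : Γ, (fun α => φ σ * α * (φ σ)⁻¹) '' 𝒜 = 𝒜) ∧
      (∀ σ τ : Γ, φ σ * unitsSMul σ (φ τ) * (φ (σ * τ))⁻¹ ∈ 𝒜) := by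
  -- membership in `𝒜` is commuting with `f`
  have key : ∀ α : Mˣ, α ∈ 𝒜 ↔ f * ↑α = ↑α * f := by
    intro α
    rw [h𝒜]
    constructor
    · intro h
      calc f * ↑α = ↑α * ↑α⁻¹ * (f * ↑α) := by rw [Units.mul_inv, one_mul]
        _ = ↑α * ((↑α⁻¹ : M) * f * ↑α) := by simp [mul_assoc]
        _ = ↑α * f := by rw [h]
    · intro h
      show (↑α⁻¹ : M) * f * ↑α = f
      calc (↑α⁻¹ : M) * f * ↑α = ↑α⁻¹ * (f * ↑α) := by rw [mul_assoc]
        _ = ↑α⁻¹ * (↑α * f) := by rw [h]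
        _ = f := by rw [← mul_assoc, Units.inv_mul, one_mul]
  -- rearranged forms of `hφ`
  have hφ' : ∀ σ : Γ, f * ↑(φ σ) = ↑(φ σ) * (σ • f) := by
    intro σ
    rw [hφ σ, ← mul_assoc, ← mul_assoc, Units.mul_inv, one_mul]
  have hφ'' : ∀ σ : Γ, (σ • f) * ↑(φ σ)⁻¹ = ↑(φ σ)⁻¹ * f := by
    intro σ
    rw [hφ σ, mul_assoc, Units.mul_inv, mul_one]
  constructor
  · intro σ
    -- first: the image is contained in `𝒜`
    have hsub : (fun α => φ σ * α * (φ σ)⁻¹) '' 𝒜 ⊆ 𝒜 := by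
      intro β hβ
      rw [← hstable σ, Set.image_image] at hβ
      obtain ⟨α, hα, rfl⟩ := hβ
      rw [key] at hα ⊢
      calc f * ↑(φ σ * unitsSMul σ α * (φ σ)⁻¹)
          = f * ↑(φ σ) * ((σ • (α : M)) * ↑(φ σ)⁻¹) := by
            simp [Units.val_mul, unitsSMul_val, mul_assoc]
        _ = ↑(φ σ) * ((σ • f) * (σ • (α : M))) * ↑(φ σ)⁻¹ := by
            rw [hφ' σ]; simp [mul_assoc]
        _ = ↑(φ σ) * ((σ • (α : M)) * (σ • f)) * ↑(φ σ)⁻¹ := by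
            rw [← smul_mul', ← smul_mul', hα]
        _ = ↑(φ σ) * (σ • (α : M)) * ((σ • f) * ↑(φ σ)⁻¹) := by
            simp [mul_assoc]
        _ = ↑(φ σ * unitsSMul σ α * (φ σ)⁻¹) * f := by
            rw [hφ'' σ]; simp [Units.val_mul, unitsSMul_val, mul_assoc]
    -- injectivity + finiteness give equality
    have hinj : Function.Injective (fun α : Mˣ => φ σ * α * (φ σ)⁻¹) := by
      intro a b h
      simp only at h
      exact mul_left_cancel (mul_right_cancel h)
    exact Set.eq_of_subset_of_ncard_le hsub
      (le_of_eq (Set.ncard_image_of_injective 𝒜 hinj).symm) hfin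
  · intro σ τ
    rw [key]
    calc f * ↑(φ σ * unitsSMul σ (φ τ) * (φ (σ * τ))⁻¹)
        = f * ↑(φ σ) * ((σ • (↑(φ τ) : M)) * ↑(φ (σ * τ))⁻¹) := by
          simp [Units.val_mul, unitsSMul_val, mul_assoc]
      _ = ↑(φ σ) * ((σ • f) * (σ • (↑(φ τ) : M))) * ↑(φ (σ * τ))⁻¹ := by
          rw [hφ' σ]; simp [mul_assoc]
      _ = ↑(φ σ) * (σ • (f * ↑(φ τ))) * ↑(φ (σ * τ))⁻¹ := by
          rw [smul_mul']
      _ = ↑(φ σ) * (σ • ((↑(φ τ) : M) * (τ • f))) * ↑(φ (σ * τ))⁻¹ := by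
          rw [hφ' τ]
      _ = ↑(φ σ) * (σ • (↑(φ τ) : M)) * ((σ * τ) • f * ↑(φ (σ * τ))⁻¹) := by
          rw [smul_mul', smul_smul]; simp [mul_assoc]
      _ = ↑(φ σ) * (σ • (↑(φ τ) : M)) * (↑(φ (σ * τ))⁻¹ * f) := by
          rw [hφ'' (σ * τ)]
      _ = ↑(φ σ * unitsSMul σ (φ τ) * (φ (σ * τ))⁻¹) * f := by
          simp [Units.val_mul, unitsSMul_val, mul_assoc]
end

section
/- Let Γ be a group acting on a monoid M by monoid automorphisms, let f ∈ M, let 𝒜_f = {α ∈ Mˣ : α^{-1}·f·α = f}, assume 𝒜_f is finite and Γ-stable, and suppose φ : Γ → Mˣ satisfies σ • f = (φ σ)^{-1}·f·(φ σ) for all σ ∈ Γ. Then the following are equivalent: (1) there exists γ ∈ Mˣ such that γ^{-1}·f·γ is fixed by every σ ∈ Γ; (2) there exists δ ∈ Mˣ such that for every σ ∈ Γ, the element (φ σ)·(σ • δ)^{-1}·δ lies in 𝒜_f (i.e. φ σ ∈ 𝒜_f·δ^{-1}·(σ • δ), so φ is a coboundary modulo 𝒜_f). -/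
lemma unitsSMul_coe {Γ M : Type*} [Group Γ] [Monoid M] [MulDistribMulAction Γ M]
    (σ : Γ) (u : Mˣ) : (↑(unitsSMul σ u) : M) = σ • (↑u : M) := rfl

lemma unitsSMul_inv {Γ M : Type*} [Group Γ] [Monoid M] [MulDistribMulAction Γ M]
    (σ : Γ) (u : Mˣ) : unitsSMul σ u⁻¹ = (unitsSMul σ u)⁻¹ :=
  map_inv (Units.map (MulDistribMulAction.toMonoidHom M σ)) u

lemma conj_eq_conj_iff {M : Type*} [Monoid M] (u v : Mˣ) (a : M) :
    ((↑u⁻¹ : M) * a * ↑u = ↑v⁻¹ * a * ↑v) ↔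
      ((↑(u * v⁻¹)⁻¹ : M) * a * ↑(u * v⁻¹) = a) := by
  rw [mul_inv_rev, inv_inv]
  constructor
  · intro h
    have : (↑v : M) * (↑u⁻¹ * a * ↑u) * ↑v⁻¹ = ↑v * (↑v⁻¹ * a * ↑v) * ↑v⁻¹ := by rw [h]
    simpa [mul_assoc] using this
  · intro h
    have : (↑v⁻¹ : M) * (↑(v * u⁻¹) * a * ↑(u * v⁻¹)) * ↑v = ↑v⁻¹ * a * ↑v := by rw [h]
    simpa [mul_assoc] using this


/-- **Doyle–Silverman, Proposition 4.1(b) (abstract form).**  Let `Γ` act on a monoid `M`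
by monoid automorphisms, let `f ∈ M`, let `𝒜_f ⊆ Mˣ` be the stabilizer of `f` under
conjugation, assumed finite and `Γ`-stable, and let `φ : Γ → Mˣ` satisfy
`σ • f = (φ σ)⁻¹ · f · (φ σ)`.  Then some conjugate `γ⁻¹·f·γ` of `f` is fixed by all of
`Γ` if and only if `φ` is a coboundary modulo `𝒜_f`, i.e. there is `δ ∈ Mˣ` with
`(φ σ)·(σ • δ)⁻¹·δ ∈ 𝒜_f` for all `σ`. -/
theorem fod_iff_coboundary
    {Γ M : Type*} [Group Γ] [Monoid M] [MulDistribMulAction Γ M]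
    (f : M)
    (𝒜 : Set Mˣ) (h𝒜 : 𝒜 = {α : Mˣ | (↑α⁻¹ : M) * f * ↑α = f})
    (hfin : 𝒜.Finite)
    (hstable : ∀ σ : Γ, (fun α => unitsSMul σ α) '' 𝒜 = 𝒜)
    (φ : Γ → Mˣ)
    (hφ : ∀ σ : Γ, σ • f = (↑(φ σ)⁻¹ : M) * f * ↑(φ σ)) :
    (∃ γ : Mˣ, ∀ σ : Γ, σ • ((↑γ⁻¹ : M) * f * ↑γ) = (↑γ⁻¹ : M) * f * ↑γ) ↔
      (∃ δ : Mˣ, ∀ σ : Γ, φ σ * (unitsSMul σ δ)⁻¹ * δ ∈ 𝒜) := by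
  subst h𝒜
  have key : ∀ (γ : Mˣ) (σ : Γ),
      (σ • ((↑γ⁻¹ : M) * f * ↑γ) = (↑γ⁻¹ : M) * f * ↑γ) ↔
        (φ σ * (unitsSMul σ γ⁻¹)⁻¹ * γ⁻¹ ∈
          {α : Mˣ | (↑α⁻¹ : M) * f * ↑α = f}) := by
    intro γ σ
    have hL : σ • ((↑γ⁻¹ : M) * f * ↑γ)
        = (↑(φ σ * unitsSMul σ γ)⁻¹ : M) * f * ↑(φ σ * unitsSMul σ γ) := by
      rw [smul_mul', smul_mul', hφ σ]
      simp [← unitsSMul_coe, ← unitsSMul_inv, mul_assoc, mul_inv_rev]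
    rw [hL, Set.mem_setOf_eq, unitsSMul_inv, inv_inv]
    exact conj_eq_conj_iff (φ σ * unitsSMul σ γ) γ f
  constructor
  · rintro ⟨γ, hγ⟩
    exact ⟨γ⁻¹, fun σ => by simpa [inv_inv] using (key γ σ).mp (hγ σ)⟩
  · rintro ⟨δ, hδ⟩
    exact ⟨δ⁻¹, fun σ => (key δ⁻¹ σ).mpr (by simpa [inv_inv] using hδ σ)⟩
end

section
/- Let s be a natural number and let e_1, …, e_r be a finite family of positive natural numbers with e_1 + ⋯ + e_r ≤ s. Then the product satisfies e_1·e_2⋯e_r ≤ exp(s/e), where e = exp(1). (By the arithmetic–geometric mean inequality, e_1⋯e_r ≤ ((e_1+⋯+e_r)/r)^r ≤ (s/r)^r ≤ exp(s/e).) -/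
lemma nat_le_exp_div_e (n : ℕ) (hn : 1 ≤ n) : (n : ℝ) ≤ Real.exp (n / Real.exp 1) := by
  have hpos : (0 : ℝ) < n := by exact_mod_cast hn
  have hlog : Real.log n ≤ n / Real.exp 1 := by
    have h := Real.log_le_sub_one_of_pos (x := n / Real.exp 1)
      (div_pos hpos (Real.exp_pos 1))
    have hlogdiv : Real.log (n / Real.exp 1) = Real.log n - 1 := by
      rw [Real.log_div (ne_of_gt hpos) (ne_of_gt (Real.exp_pos 1)), Real.log_exp]
    linarith [hlogdiv ▸ h]
  calc (n : ℝ) = Real.exp (Real.log n) := (Real.exp_log hpos).symm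
    _ ≤ Real.exp (n / Real.exp 1) := Real.exp_le_exp.mpr hlog

/-- The AM–GM estimate used in the proof of Theorem 6.1(a):  if `e_1, …, e_r` are
positive natural numbers with `e_1 + ⋯ + e_r ≤ s`, then
`e_1 ⋯ e_r ≤ ((e_1+⋯+e_r)/r)^r ≤ (s/r)^r ≤ exp(s/e)`. -/
theorem prod_le_exp_div_e {ι : Type*} [Fintype ι] (s : ℕ) (e : ι → ℕ)
    (he : ∀ i, 1 ≤ e i) (hsum : ∑ i, e i ≤ s) :
    ((∏ i, e i : ℕ) : ℝ) ≤ Real.exp (s / Real.exp 1) := by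
  push_cast
  calc (∏ i, (e i : ℝ)) ≤ ∏ i, Real.exp (e i / Real.exp 1) := by
        apply Finset.prod_le_prod
        · intro i _; positivity
        · intro i _; exact nat_le_exp_div_e (e i) (he i)
    _ = Real.exp (∑ i, (e i : ℝ) / Real.exp 1) := by rw [Real.exp_sum]
    _ ≤ Real.exp (s / Real.exp 1) := by
        apply Real.exp_le_exp.mpr
        rw [← Finset.sum_div]
        apply div_le_div_of_nonneg_right _ (Real.exp_pos 1).le
        exact_mod_cast hsum
end
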